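/- Let B be the 3×3 real matrix with rows (0, 1/b₁, 0), (0, 0, 1/c₂), (1/a₃, −(a₁/(b₁a₃))s, −a₂/(a₃c₂)), where a₃b₁c₂ ≠ 0, and let λ = 1/|c₂| > 1. Suppose |a₁ s| ≥ (λ|a₃b₁c₂| + |b₁c₂| + |a₂b₁|)/|c₂|. Then for every vector v = (v₀, u₀₁, u₀₂) ∈ ℝ³ with max(|u₀₁|,|u₀₂|) > |v₀|, one has max(|(Bv)₂|, |(Bv)₃|) ≥ λ·max(|u₀₁|,|u₀₂|). -/

import Mathlib

theorem stmt_8 (a₁ a₂ a₃ b₁ c₂ s : ℝ) (h : a₃ * b₁ * c₂ ≠ 0) (hc : |c₂| < 1)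
    (hs : ((1 / |c₂|) * |a₃ * b₁ * c₂| + |b₁ * c₂| + |a₂ * b₁|) / |c₂| ≤ |a₁ * s|)
    (v₀ u₀₁ u₀₂ : ℝ) (hv : |v₀| < max |u₀₁| |u₀₂|) :
    (1 / |c₂|) * max |u₀₁| |u₀₂| ≤
      max |u₀₂ / c₂|
        |v₀ / a₃ - (a₁ / (b₁ * a₃)) * s * u₀₁ - (a₂ / (a₃ * c₂)) * u₀₂| := by
  have ha₃ : a₃ ≠ 0 := fun e => h (by simp [e])
  have hb₁ : b₁ ≠ 0 := fun e => h (by simp [e])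
  have hc₂ : c₂ ≠ 0 := fun e => h (by simp [e])
  have pa : (0:ℝ) < |a₃| := abs_pos.mpr ha₃
  have pb : (0:ℝ) < |b₁| := abs_pos.mpr hb₁
  have pc : (0:ℝ) < |c₂| := abs_pos.mpr hc₂
  rcases le_total |u₀₁| |u₀₂| with h1 | h1
  · rw [max_eq_right h1]
    refine le_trans (le_of_eq ?_) (le_max_left _ _)
    rw [abs_div]; ring
  · rw [max_eq_left h1]
    refine le_trans ?_ (le_max_right _ _)
    have key : |(a₁ / (b₁ * a₃)) * s * u₀₁| - |v₀ / a₃| - |(a₂ / (a₃ * c₂)) * u₀₂| ≤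
        |v₀ / a₃ - (a₁ / (b₁ * a₃)) * s * u₀₁ - (a₂ / (a₃ * c₂)) * u₀₂| := by
      have h2 := abs_sub_abs_le_abs_sub ((a₁ / (b₁ * a₃)) * s * u₀₁)
        (v₀ / a₃ - (a₂ / (a₃ * c₂)) * u₀₂)
      have h3 := abs_sub (v₀ / a₃) ((a₂ / (a₃ * c₂)) * u₀₂)
      have h4 : |(a₁ / (b₁ * a₃)) * s * u₀₁ - (v₀ / a₃ - (a₂ / (a₃ * c₂)) * u₀₂)| =
          |v₀ / a₃ - (a₁ / (b₁ * a₃)) * s * u₀₁ - (a₂ / (a₃ * c₂)) * u₀₂| := by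
        rw [← abs_neg]; ring_nf
      linarith [h2, h3, h4.le, h4.ge]
    refine le_trans ?_ key
    have e1 : |(a₁ / (b₁ * a₃)) * s * u₀₁| = |a₁ * s| / (|b₁| * |a₃|) * |u₀₁| := by
      rw [abs_mul, abs_mul, abs_div, abs_mul, abs_mul]; ring
    have e2 : |v₀ / a₃| = |v₀| / |a₃| := abs_div _ _
    have e3 : |(a₂ / (a₃ * c₂)) * u₀₂| = |a₂| / (|a₃| * |c₂|) * |u₀₂| := by
      rw [abs_mul, abs_div, abs_mul]
    rw [e1, e2, e3]
    have hv' : |v₀| < |u₀₁| := by rw [max_eq_left h1] at hv; exact hv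
    rw [abs_mul, abs_mul, abs_mul, abs_mul] at hs
    have hs2 : 1/|c₂| * (|a₃| * |b₁| * |c₂|) + |b₁| * |c₂| + |a₂| * |b₁| ≤ |a₁ * s| * |c₂| := by
      rw [div_le_iff₀ pc] at hs; linarith
    have hs3 : |a₃| * |b₁| + |b₁| * |c₂| + |a₂| * |b₁| ≤ |a₁ * s| * |c₂| := by
      have : 1/|c₂| * (|a₃| * |b₁| * |c₂|) = |a₃| * |b₁| := by field_simp
      linarith
    have hpos : (0:ℝ) < |a₃| * |b₁| * |c₂| := by positivity
    rw [← mul_le_mul_iff_right₀ hpos]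
    have lhs : |a₃| * |b₁| * |c₂| * (1 / |c₂| * |u₀₁|) = |a₃| * |b₁| * |u₀₁| := by
      field_simp
    have rhs : |a₃| * |b₁| * |c₂| * (|a₁ * s| / (|b₁| * |a₃|) * |u₀₁| - |v₀| / |a₃|
        - |a₂| / (|a₃| * |c₂|) * |u₀₂|)
        = |a₁ * s| * |c₂| * |u₀₁| - |b₁| * |c₂| * |v₀| - |a₂| * |b₁| * |u₀₂| := by
      field_simp
    rw [lhs, rhs]
    nlinarith [mul_le_mul_of_nonneg_right hs3 (abs_nonneg u₀₁),
      mul_le_mul_of_nonneg_left hv'.le (mul_pos pb pc).le,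
      mul_le_mul_of_nonneg_left h1 (by positivity : (0:ℝ) ≤ |a₂| * |b₁|)]
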